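/- Let ε > 0, λ > 0, and let f : [0,∞) × [0,∞) → [0,∞) be continuous, C¹ in t, with f(·,t) and v ↦ v f(v,t) integrable on (0,∞) for every t, with ∫₀^∞ f(v,t) dv = 1 for all t ≥ 0, and such that t ↦ ∫₀^∞ v f(v,t) dv can be differentiated under the integral sign. If f satisfies the ε-BDY equation pointwise, then d/dt ∫₀^∞ v f(v,t) dv = 0 for all t ≥ 0; i.e. the ε-BDY dynamics conserves the mean wealth. -/

import Mathlib

open MeasureTheory Set Filter

/-- Translation invariance of set integrals over `Ioi`. -/
lemma shift_integral_Ioi (g : ℝ → ℝ) (a c : ℝ) :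
    ∫ v in Ioi c, g (v + a) = ∫ v in Ioi (c + a), g v := by
  have h := (measurePreserving_add_right (volume : Measure ℝ) a).setIntegral_preimage_emb
    (measurableEmbedding_addRight a) g (Ioi (c + a))
  rw [← h]
  congr 1
  ext x; simp [lt_sub_iff_add_lt]

lemma shift_integrableOn_Ioi (g : ℝ → ℝ) (a c : ℝ) (h : IntegrableOn g (Ioi (c + a))) :
    IntegrableOn (fun v => g (v + a)) (Ioi c) := by
  have h2 := ((measurePreserving_add_right (volume : Measure ℝ) a).integrableOn_comp_preimage
    (measurableEmbedding_addRight a) (s := Ioi (c + a)) (f := g)).2 h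
  have : (fun v => v + a) ⁻¹' Ioi (c + a) = Ioi c := by ext x; simp
  rwa [this] at h2

/-- **Mean conservation for the ε-BDY equation.**
If `f` is a nonnegative classical (C¹-in-time) solution of the ε-BDY equation
with unit total mass for all times, `f(·,t)` and `v ↦ v f(v,t)` integrable for every `t`,
and `t ↦ ∫₀^∞ v f(v,t) dv` may be differentiated under the integral sign, then
`d/dt ∫₀^∞ v f(v,t) dv = 0` for all `t ≥ 0`. -/
theorem epsilon_BDY_mean_conservation
    (ε lam : ℝ) (hε : 0 < ε) (hlam : 0 < lam)
    (f ft : ℝ → ℝ → ℝ)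
    (hcont : ContinuousOn (fun p : ℝ × ℝ => f p.1 p.2) (Ici 0 ×ˢ Ici 0))
    (hnonneg : ∀ v t : ℝ, 0 ≤ v → 0 ≤ t → 0 ≤ f v t)
    (hderiv_t : ∀ v t : ℝ, 0 ≤ v → 0 ≤ t → HasDerivAt (fun s => f v s) (ft v t) t)
    (hint : ∀ t : ℝ, 0 ≤ t → IntegrableOn (fun v => f v t) (Ioi 0))
    (hint1 : ∀ t : ℝ, 0 ≤ t → IntegrableOn (fun v => v * f v t) (Ioi 0))
    (hmass : ∀ t : ℝ, 0 ≤ t → ∫ v in Ioi (0:ℝ), f v t = 1)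
    (hDUI : ∀ t : ℝ, 0 ≤ t →
      HasDerivAt (fun s => ∫ v in Ioi (0:ℝ), v * f v s)
        (∫ v in Ioi (0:ℝ), v * ft v t) t)
    (hPDE : ∀ v t : ℝ, 0 ≤ v → 0 ≤ t →
      ft v t = lam / 2 *
        (f (v + ε) t - (∫ w in Ioi ε, f w t) * f v t +
          ((∫ w in Ioi ε, f w t) * f (v - ε) t - f v t) * (if ε ≤ v then 1 else 0))) :
    ∀ t : ℝ, 0 ≤ t → deriv (fun s => ∫ v in Ioi (0:ℝ), v * f v s) t = 0 := by
  intro t ht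
  rw [(hDUI t ht).deriv]
  set r : ℝ := ∫ w in Ioi ε, f w t with hr
  -- basic integrabilities
  have hf : IntegrableOn (fun v => f v t) (Ioi 0) := hint t ht
  have hvf : IntegrableOn (fun v => v * f v t) (Ioi 0) := hint1 t ht
  have hsub : Ioi ε ⊆ Ioi (0:ℝ) := Ioi_subset_Ioi hε.le
  have hfε : IntegrableOn (fun v => f v t) (Ioi ε) := hf.mono_set hsub
  have hvfε : IntegrableOn (fun v => v * f v t) (Ioi ε) := hvf.mono_set hsub
  -- the three pieces
  set H : ℝ → ℝ := fun v => r * (v * f (v - ε) t) - v * f v t with hH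
  have hg1 : IntegrableOn (fun v => v * f (v + ε) t) (Ioi 0) := by
    have hG : IntegrableOn (fun w => (w - ε) * f w t) (Ioi (0 + ε)) := by
      rw [zero_add]
      have : (fun w => (w - ε) * f w t) = fun w => w * f w t - ε * f w t := by
        ext w; ring
      rw [this]
      exact hvfε.sub (hfε.const_mul ε)
    have := shift_integrableOn_Ioi (fun w => (w - ε) * f w t) ε 0 hG
    simpa using this
  have hg2 : IntegrableOn (fun v => r * (v * f v t)) (Ioi 0) := hvf.const_mul r
  have hshift : IntegrableOn (fun v => v * f (v - ε) t) (Ioi ε) := by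
    have hG : IntegrableOn (fun w => (w + ε) * f w t) (Ioi (ε + -ε)) := by
      rw [add_neg_cancel]
      have : (fun w => (w + ε) * f w t) = fun w => w * f w t + ε * f w t := by
        ext w; ring
      rw [this]
      exact hvf.add (hf.const_mul ε)
    have := shift_integrableOn_Ioi (fun w => (w + ε) * f w t) (-ε) ε hG
    simpa [sub_eq_add_neg] using this
  have hHint : IntegrableOn H (Ioi ε) := (hshift.const_mul r).sub hvfε
  have hHici : IntegrableOn H (Ici ε) := (integrableOn_Ici_iff_integrableOn_Ioi enorm_ne_top).2 hHint
  have hg3 : IntegrableOn ((Ici ε).indicator H) (Ioi 0) :=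
    (hHici.integrable_indicator measurableSet_Ici).integrableOn
  -- rewrite the integrand
  have hcong : ∫ v in Ioi (0:ℝ), v * ft v t
      = ∫ v in Ioi (0:ℝ), lam / 2 *
          (v * f (v + ε) t - r * (v * f v t) + (Ici ε).indicator H v) := by
    refine setIntegral_congr_fun measurableSet_Ioi (fun v hv => ?_)
    have hv0 : (0:ℝ) ≤ v := le_of_lt hv
    rw [hPDE v t hv0 ht, Set.indicator_apply, hH]
    simp only [mem_Ici]
    split <;> ring
  rw [hcong]
  rw [integral_const_mul]
  have hg12 : IntegrableOn (fun v => v * f (v + ε) t - r * (v * f v t)) (Ioi 0) :=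
    hg1.sub hg2
  rw [integral_add hg12 hg3, integral_sub hg1 hg2]
  -- evaluate each piece
  have E1 : ∫ v in Ioi (0:ℝ), v * f (v + ε) t
      = (∫ v in Ioi ε, v * f v t) - ε * r := by
    have h1 : ∫ v in Ioi (0:ℝ), v * f (v + ε) t
        = ∫ v in Ioi (0:ℝ), (fun w => (w - ε) * f w t) (v + ε) := by
      refine setIntegral_congr_fun measurableSet_Ioi (fun v _ => ?_)
      simp
    rw [h1, shift_integral_Ioi (fun w => (w - ε) * f w t) ε 0, zero_add]
    have h2 : ∫ v in Ioi ε, (v - ε) * f v t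
        = ∫ v in Ioi ε, (v * f v t - ε * f v t) := by
      refine setIntegral_congr_fun measurableSet_Ioi (fun v _ => ?_)
      ring
    rw [h2, integral_sub hvfε (hfε.const_mul ε), integral_const_mul, hr]
  have E2 : ∫ v in Ioi (0:ℝ), r * (v * f v t) = r * ∫ v in Ioi (0:ℝ), v * f v t :=
    integral_const_mul r _
  have Eshift : ∫ v in Ioi ε, v * f (v - ε) t
      = (∫ v in Ioi (0:ℝ), v * f v t) + ε := by
    have h1 : ∫ v in Ioi ε, v * f (v - ε) t
        = ∫ v in Ioi ε, (fun w => (w + ε) * f w t) (v + -ε) := by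
      refine setIntegral_congr_fun measurableSet_Ioi (fun v _ => ?_)
      simp [sub_eq_add_neg]
    rw [h1, shift_integral_Ioi (fun w => (w + ε) * f w t) (-ε) ε, add_neg_cancel]
    have h2 : ∫ v in Ioi (0:ℝ), (v + ε) * f v t
        = ∫ v in Ioi (0:ℝ), (v * f v t + ε * f v t) := by
      refine setIntegral_congr_fun measurableSet_Ioi (fun v _ => ?_)
      ring
    rw [h2, integral_add hvf (hf.const_mul ε), integral_const_mul, hmass t ht, mul_one]
  have E3 : ∫ v in Ioi (0:ℝ), (Ici ε).indicator H v
      = r * ((∫ v in Ioi (0:ℝ), v * f v t) + ε) - ∫ v in Ioi ε, v * f v t := by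
    rw [setIntegral_indicator measurableSet_Ici]
    have hset : Ioi (0:ℝ) ∩ Ici ε = Ici ε := by
      ext x; simp only [mem_inter_iff, mem_Ioi, mem_Ici, and_iff_right_iff_imp]
      intro hx; linarith
    rw [hset]
    rw [hH]
    have : ∫ v in Ici ε, (r * (v * f (v - ε) t) - v * f v t)
        = (∫ v in Ici ε, r * (v * f (v - ε) t)) - ∫ v in Ici ε, v * f v t := by
      refine integral_sub ?_ ?_
      · exact (integrableOn_Ici_iff_integrableOn_Ioi enorm_ne_top).2 (hshift.const_mul r)
      · exact (integrableOn_Ici_iff_integrableOn_Ioi enorm_ne_top).2 hvfε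
    rw [this]
    rw [integral_Ici_eq_integral_Ioi, integral_Ici_eq_integral_Ioi,
      integral_const_mul, Eshift]
  rw [E1, E2, E3]
  ring
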